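/- Let m ≥ 2 be an integer and P : ℝ → ℝ a C², 2π-periodic function. Let f be the function on ℝ² \ {0} given in polar coordinates by f(ρ cos φ, ρ sin φ) = ρ^m P(φ) for ρ > 0. Then at every point of ℝ² \ {0}: f_xx f_yy − f_xy² = (m−1) ρ^{2m−4} [ m² P(φ)² + m P(φ) P''(φ) − (m−1) P'(φ)² ]. Consequently, f_xx f_yy − f_xy² > 0 everywhere on ℝ² \ {0} if and only if m² P(φ)² + m P(φ) P''(φ) − (m−1) P'(φ)² > 0 for all φ ∈ ℝ. -/

import Mathlib

open Real

/-- Second partial derivative `∂²F/∂x²`. -/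
noncomputable def fxx (F : ℝ × ℝ → ℝ) (p : ℝ × ℝ) : ℝ :=
  fderiv ℝ (fun q => fderiv ℝ F q (1, 0)) p (1, 0)

/-- Second partial derivative `∂²F/∂x∂y`. -/
noncomputable def fxy (F : ℝ × ℝ → ℝ) (p : ℝ × ℝ) : ℝ :=
  fderiv ℝ (fun q => fderiv ℝ F q (0, 1)) p (1, 0)

/-- Second partial derivative `∂²F/∂y²`. -/
noncomputable def fyy (F : ℝ × ℝ → ℝ) (p : ℝ × ℝ) : ℝ :=
  fderiv ℝ (fun q => fderiv ℝ F q (0, 1)) p (0, 1)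

/- ## Auxiliary machinery -/

noncomputable def lm (a b : ℝ) : ℝ × ℝ →L[ℝ] ℝ :=
  a • ContinuousLinearMap.fst ℝ ℝ ℝ + b • ContinuousLinearMap.snd ℝ ℝ ℝ

@[simp] lemma lm_apply (a b : ℝ) (w : ℝ × ℝ) : lm a b w = a * w.1 + b * w.2 := by
  simp [lm, smul_eq_mul]

lemma HasFDerivAt.clm_congr {f : ℝ × ℝ → ℝ} {L L' : ℝ × ℝ →L[ℝ] ℝ} {q : ℝ × ℝ}
    (h : HasFDerivAt f L q) (h' : ∀ w, L w = L' w) : HasFDerivAt f L' q := by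
  rwa [ContinuousLinearMap.ext h'] at h

/-- radius function -/
noncomputable def SS (p : ℝ × ℝ) : ℝ := Real.sqrt (p.1 ^ 2 + p.2 ^ 2)

/-- local angle function adapted to base angle `φ` -/
noncomputable def TH (φ : ℝ) (p : ℝ × ℝ) : ℝ :=
  φ + Real.arctan ((Real.cos φ * p.2 - Real.sin φ * p.1) /
      (Real.cos φ * p.1 + Real.sin φ * p.2))

lemma hasFDerivAt_SS (q : ℝ × ℝ) (hq : 0 < q.1 ^ 2 + q.2 ^ 2) :
    HasFDerivAt SS (lm (q.1 / SS q) (q.2 / SS q)) q := by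
  have hS : 0 < SS q := Real.sqrt_pos.mpr hq
  have hN : HasFDerivAt (fun p : ℝ × ℝ => p.1 ^ 2 + p.2 ^ 2) (lm (2 * q.1) (2 * q.2)) q := by
    have h1 : HasFDerivAt (fun p : ℝ × ℝ => p.1 ^ 2)
        ((2 * q.1 ^ 1) • ContinuousLinearMap.fst ℝ ℝ ℝ) q :=
      (hasDerivAt_pow 2 q.1).comp_hasFDerivAt q (hasFDerivAt_fst (𝕜 := ℝ) (p := q))
    have h2 : HasFDerivAt (fun p : ℝ × ℝ => p.2 ^ 2)
        ((2 * q.2 ^ 1) • ContinuousLinearMap.snd ℝ ℝ ℝ) q :=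
      (hasDerivAt_pow 2 q.2).comp_hasFDerivAt q (hasFDerivAt_snd (𝕜 := ℝ) (p := q))
    exact (h1.add h2).clm_congr fun w => by simp; try ring
  have h := (Real.hasDerivAt_sqrt hq.ne').comp_hasFDerivAt q hN
  exact h.clm_congr fun w => by
    simp only [ContinuousLinearMap.coe_smul', Pi.smul_apply, lm_apply, smul_eq_mul]
    rw [show Real.sqrt (q.1 ^ 2 + q.2 ^ 2) = SS q from rfl]
    field_simp

lemma hasFDerivAt_SSpow (k : ℕ) (q : ℝ × ℝ) (hq : 0 < q.1 ^ 2 + q.2 ^ 2) :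
    HasFDerivAt (fun p => SS p ^ k)
      (lm ((k : ℝ) * SS q ^ k * q.1 / (q.1 ^ 2 + q.2 ^ 2))
          ((k : ℝ) * SS q ^ k * q.2 / (q.1 ^ 2 + q.2 ^ 2))) q := by
  have hS : 0 < SS q := Real.sqrt_pos.mpr hq
  have hsq : SS q ^ 2 = q.1 ^ 2 + q.2 ^ 2 := Real.sq_sqrt hq.le
  have h := (hasDerivAt_pow k (SS q)).comp_hasFDerivAt q (hasFDerivAt_SS q hq)
  refine h.clm_congr fun w => ?_
  simp only [ContinuousLinearMap.coe_smul', Pi.smul_apply, lm_apply, smul_eq_mul]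
  rw [← hsq]
  cases k with
  | zero => simp
  | succ n =>
    simp only [Nat.add_sub_cancel, pow_succ]
    field_simp

lemma hasFDerivAt_TH (φ : ℝ) (q : ℝ × ℝ) (hq : 0 < Real.cos φ * q.1 + Real.sin φ * q.2) :
    HasFDerivAt (TH φ) (lm (-q.2 / (q.1 ^ 2 + q.2 ^ 2)) (q.1 / (q.1 ^ 2 + q.2 ^ 2))) q := by
  have huv : (Real.cos φ * q.1 + Real.sin φ * q.2) ^ 2
      + (Real.cos φ * q.2 - Real.sin φ * q.1) ^ 2 = q.1 ^ 2 + q.2 ^ 2 := by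
    linear_combination (q.1 ^ 2 + q.2 ^ 2) * Real.sin_sq_add_cos_sq φ
  have hr2 : 0 < q.1 ^ 2 + q.2 ^ 2 := by nlinarith
  have hu : HasFDerivAt (fun p : ℝ × ℝ => Real.cos φ * p.1 + Real.sin φ * p.2)
      (lm (Real.cos φ) (Real.sin φ)) q := by
    have h := ((hasFDerivAt_fst (𝕜 := ℝ) (p := q)).const_mul (Real.cos φ)).add
      ((hasFDerivAt_snd (𝕜 := ℝ) (p := q)).const_mul (Real.sin φ))
    exact h.clm_congr fun w => by simp
  have hv : HasFDerivAt (fun p : ℝ × ℝ => Real.cos φ * p.2 - Real.sin φ * p.1)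
      (lm (-Real.sin φ) (Real.cos φ)) q := by
    have h := ((hasFDerivAt_snd (𝕜 := ℝ) (p := q)).const_mul (Real.cos φ)).sub
      ((hasFDerivAt_fst (𝕜 := ℝ) (p := q)).const_mul (Real.sin φ))
    exact h.clm_congr fun w => by simp; ring
  have hu0 : Real.cos φ * q.1 + Real.sin φ * q.2 ≠ 0 := hq.ne'
  have hinv : HasFDerivAt (fun p : ℝ × ℝ => (Real.cos φ * p.1 + Real.sin φ * p.2)⁻¹)
      ((-((Real.cos φ * q.1 + Real.sin φ * q.2) ^ 2)⁻¹) • lm (Real.cos φ) (Real.sin φ)) q :=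
    (hasDerivAt_inv hu0).comp_hasFDerivAt q hu
  have hdiv : HasFDerivAt (fun p : ℝ × ℝ =>
      (Real.cos φ * p.2 - Real.sin φ * p.1) / (Real.cos φ * p.1 + Real.sin φ * p.2)) _ q :=
    (HasFDerivAt.congr_of_eventuallyEq (hv.mul hinv)
      (Filter.Eventually.of_forall fun p => div_eq_mul_inv _ _))
  have harc := (Real.hasDerivAt_arctan
    ((Real.cos φ * q.2 - Real.sin φ * q.1) / (Real.cos φ * q.1 + Real.sin φ * q.2)))
    |>.comp_hasFDerivAt q hdiv
  have h := harc.const_add φ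
  refine h.clm_congr fun w => ?_
  simp only [ContinuousLinearMap.coe_smul', Pi.smul_apply, ContinuousLinearMap.coe_sub',
    Pi.sub_apply, ContinuousLinearMap.add_apply, ContinuousLinearMap.coe_mul,
    lm_apply, smul_eq_mul, ContinuousLinearMap.neg_apply]
  set u := Real.cos φ * q.1 + Real.sin φ * q.2 with hu'
  set v := Real.cos φ * q.2 - Real.sin φ * q.1 with hv'
  have hc1 : q.2 = v * Real.cos φ + u * Real.sin φ := by
    rw [hu', hv']; linear_combination (-q.2) * Real.sin_sq_add_cos_sq φ
  have hc2 : q.1 = u * Real.cos φ - v * Real.sin φ := by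
    rw [hu', hv']; linear_combination (-q.1) * Real.sin_sq_add_cos_sq φ
  have hc3 : q.1 ^ 2 + q.2 ^ 2 = u ^ 2 + v ^ 2 := by
    rw [hu', hv']; linear_combination (-(q.1 ^ 2) - q.2 ^ 2) * Real.sin_sq_add_cos_sq φ
  rw [hc3]
  nth_rewrite 1 [hc1]
  nth_rewrite 1 [hc2]
  have hden : 1 + (v / u) ^ 2 = (u ^ 2 + v ^ 2) / u ^ 2 := by
    field_simp
  rw [hden]
  have huv0 : u ^ 2 + v ^ 2 ≠ 0 := by positivity
  field_simp
  ring

lemma hasFDerivAt_QTH (φ : ℝ) (Q : ℝ → ℝ) (hQ : Differentiable ℝ Q) (q : ℝ × ℝ)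
    (hq : 0 < Real.cos φ * q.1 + Real.sin φ * q.2) :
    HasFDerivAt (fun p => Q (TH φ p))
      (lm (deriv Q (TH φ q) * (-q.2 / (q.1 ^ 2 + q.2 ^ 2)))
          (deriv Q (TH φ q) * (q.1 / (q.1 ^ 2 + q.2 ^ 2)))) q := by
  have h := (hQ (TH φ q)).hasDerivAt.comp_hasFDerivAt q (hasFDerivAt_TH φ q hq)
  exact h.clm_congr fun w => by
    simp only [ContinuousLinearMap.coe_smul', Pi.smul_apply, lm_apply, smul_eq_mul]
    ring

/-- Main computational lemma: the three second partials of `F` at a point off the origin. -/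
lemma key (k : ℕ) (P : ℝ → ℝ) (hP1 : Differentiable ℝ P) (hP2 : Differentiable ℝ (deriv P))
    (F : ℝ × ℝ → ℝ)
    (hF : ∀ ρ φ : ℝ, 0 < ρ → F (ρ * Real.cos φ, ρ * Real.sin φ) = ρ ^ (k + 2) * P φ)
    (ρ φ : ℝ) (hρ : 0 < ρ) :
    fxx F (ρ * Real.cos φ, ρ * Real.sin φ) =
      ρ ^ k * ((((k : ℝ) + 2) * k * Real.cos φ ^ 2 + ((k : ℝ) + 2)) * P φ
        - 2 * ((k : ℝ) + 1) * Real.cos φ * Real.sin φ * deriv P φ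
        + Real.sin φ ^ 2 * deriv (deriv P) φ) ∧
    fxy F (ρ * Real.cos φ, ρ * Real.sin φ) =
      ρ ^ k * (((k : ℝ) + 2) * k * Real.cos φ * Real.sin φ * P φ
        + ((k : ℝ) * Real.cos φ ^ 2 - ((k : ℝ) + 2) * Real.sin φ ^ 2 + 1) * deriv P φ
        - Real.cos φ * Real.sin φ * deriv (deriv P) φ) ∧
    fyy F (ρ * Real.cos φ, ρ * Real.sin φ) =
      ρ ^ k * ((((k : ℝ) + 2) * k * Real.sin φ ^ 2 + ((k : ℝ) + 2)) * P φ
        + 2 * ((k : ℝ) + 1) * Real.cos φ * Real.sin φ * deriv P φ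
        + Real.cos φ ^ 2 * deriv (deriv P) φ) := by
  have hU : IsOpen {p : ℝ × ℝ | 0 < Real.cos φ * p.1 + Real.sin φ * p.2} := by
    apply isOpen_lt continuous_const
    fun_prop
  have huv : ∀ q : ℝ × ℝ, (Real.cos φ * q.1 + Real.sin φ * q.2) ^ 2
      + (Real.cos φ * q.2 - Real.sin φ * q.1) ^ 2 = q.1 ^ 2 + q.2 ^ 2 := fun q => by
    linear_combination (q.1 ^ 2 + q.2 ^ 2) * Real.sin_sq_add_cos_sq φ
  have hr2 : ∀ q : ℝ × ℝ, 0 < Real.cos φ * q.1 + Real.sin φ * q.2 → 0 < q.1 ^ 2 + q.2 ^ 2 :=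
    fun q hq => by nlinarith [huv q]
  have hp0 : 0 < Real.cos φ * (ρ * Real.cos φ, ρ * Real.sin φ).1
      + Real.sin φ * (ρ * Real.cos φ, ρ * Real.sin φ).2 := by
    have : Real.cos φ * (ρ * Real.cos φ) + Real.sin φ * (ρ * Real.sin φ) = ρ := by
      linear_combination ρ * Real.sin_sq_add_cos_sq φ
    simpa [this] using hρ
  -- F agrees with the smooth model on the halfplane
  have hFG : ∀ q : ℝ × ℝ, 0 < Real.cos φ * q.1 + Real.sin φ * q.2 →
      F q = SS q ^ (k + 2) * P (TH φ q) := by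
    intro q hq
    have h2 := hr2 q hq
    have hS : 0 < SS q := Real.sqrt_pos.mpr h2
    have hsq : SS q ^ 2 = q.1 ^ 2 + q.2 ^ 2 := Real.sq_sqrt h2.le
    have hu0 : Real.cos φ * q.1 + Real.sin φ * q.2 ≠ 0 := hq.ne'
    have h1t : Real.sqrt (1 + ((Real.cos φ * q.2 - Real.sin φ * q.1) /
        (Real.cos φ * q.1 + Real.sin φ * q.2)) ^ 2)
        = SS q / (Real.cos φ * q.1 + Real.sin φ * q.2) := by
      rw [show 1 + ((Real.cos φ * q.2 - Real.sin φ * q.1) /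
          (Real.cos φ * q.1 + Real.sin φ * q.2)) ^ 2
          = (SS q / (Real.cos φ * q.1 + Real.sin φ * q.2)) ^ 2 by
        rw [div_pow, div_pow, hsq]
        rw [← huv q, add_div, div_self (pow_ne_zero 2 hu0)]]
      exact Real.sqrt_sq (by positivity)
    have hkey : (SS q * Real.cos (TH φ q), SS q * Real.sin (TH φ q)) = q := by
      have hcos : Real.cos (TH φ q) = (Real.cos φ - Real.sin φ *
          ((Real.cos φ * q.2 - Real.sin φ * q.1) / (Real.cos φ * q.1 + Real.sin φ * q.2)))
          / (SS q / (Real.cos φ * q.1 + Real.sin φ * q.2)) := by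
        rw [TH, Real.cos_add, Real.cos_arctan, Real.sin_arctan, h1t]
        ring
      have hsin : Real.sin (TH φ q) = (Real.sin φ + Real.cos φ *
          ((Real.cos φ * q.2 - Real.sin φ * q.1) / (Real.cos φ * q.1 + Real.sin φ * q.2)))
          / (SS q / (Real.cos φ * q.1 + Real.sin φ * q.2)) := by
        rw [TH, Real.sin_add, Real.cos_arctan, Real.sin_arctan, h1t]
        ring
      have hprod : Prod.mk (SS q * Real.cos (TH φ q)) (SS q * Real.sin (TH φ q)) = (q.1, q.2) := by
        rw [hcos, hsin]
        congr 1
        · field_simp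
          linear_combination q.1 * Real.sin_sq_add_cos_sq φ
        · field_simp
          linear_combination q.2 * Real.sin_sq_add_cos_sq φ
      simpa using hprod
    calc F q = F (SS q * Real.cos (TH φ q), SS q * Real.sin (TH φ q)) := by rw [hkey]
    _ = SS q ^ (k + 2) * P (TH φ q) := hF _ _ hS
  -- first partial derivatives on the halfplane
  have hD : ∀ q : ℝ × ℝ, 0 < Real.cos φ * q.1 + Real.sin φ * q.2 →
      fderiv ℝ F q (1, 0) =
        SS q ^ k * (((k : ℝ) + 2) * q.1 * P (TH φ q) - q.2 * deriv P (TH φ q)) ∧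
      fderiv ℝ F q (0, 1) =
        SS q ^ k * (((k : ℝ) + 2) * q.2 * P (TH φ q) + q.1 * deriv P (TH φ q)) := by
    intro q hq
    have h2 := hr2 q hq
    have hS : 0 < SS q := Real.sqrt_pos.mpr h2
    have hsq : SS q ^ 2 = q.1 ^ 2 + q.2 ^ 2 := Real.sq_sqrt h2.le
    have hev : F =ᶠ[nhds q] fun p => SS p ^ (k + 2) * P (TH φ p) := by
      filter_upwards [hU.mem_nhds hq] with r hr using hFG r hr
    have hG := (hasFDerivAt_SSpow (k + 2) q h2).mul (hasFDerivAt_QTH φ P hP1 q hq)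
    rw [hev.fderiv_eq, show (fun p => SS p ^ (k + 2) * P (TH φ p)) =
      ((fun p => SS p ^ (k + 2)) * fun p => P (TH φ p)) from rfl, hG.fderiv]
    constructor <;>
    · simp only [ContinuousLinearMap.add_apply, ContinuousLinearMap.coe_smul',
        Pi.smul_apply, lm_apply, smul_eq_mul]
      rw [← hsq]
      field_simp
      push_cast
      ring
  -- now the second derivatives at p0
  have h2 := hr2 _ hp0
  have hSp0 : SS (ρ * Real.cos φ, ρ * Real.sin φ) = ρ := by
    rw [SS]
    simp only
    rw [show (ρ * Real.cos φ) ^ 2 + (ρ * Real.sin φ) ^ 2 = ρ ^ 2 by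
      linear_combination ρ ^ 2 * Real.sin_sq_add_cos_sq φ]
    exact Real.sqrt_sq hρ.le
  have hTp0 : TH φ (ρ * Real.cos φ, ρ * Real.sin φ) = φ := by
    rw [TH]
    simp only
    rw [show Real.cos φ * (ρ * Real.sin φ) - Real.sin φ * (ρ * Real.cos φ) = 0 by ring]
    simp
  have hrp0 : (ρ * Real.cos φ, ρ * Real.sin φ).1 ^ 2 + (ρ * Real.cos φ, ρ * Real.sin φ).2 ^ 2
      = ρ ^ 2 := by
    simp only
    linear_combination ρ ^ 2 * Real.sin_sq_add_cos_sq φ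
  have hev1 : (fun q => fderiv ℝ F q (1, 0)) =ᶠ[nhds (ρ * Real.cos φ, ρ * Real.sin φ)]
      fun q => SS q ^ k * (((k : ℝ) + 2) * q.1 * P (TH φ q) - q.2 * deriv P (TH φ q)) := by
    filter_upwards [hU.mem_nhds hp0] with r hr using (hD r hr).1
  have hev2 : (fun q => fderiv ℝ F q (0, 1)) =ᶠ[nhds (ρ * Real.cos φ, ρ * Real.sin φ)]
      fun q => SS q ^ k * (((k : ℝ) + 2) * q.2 * P (TH φ q) + q.1 * deriv P (TH φ q)) := by
    filter_upwards [hU.mem_nhds hp0] with r hr using (hD r hr).2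
  have hPd := hasFDerivAt_QTH φ P hP1 _ hp0
  have hPd2 := hasFDerivAt_QTH φ (deriv P) hP2 _ hp0
  have hB1 : HasFDerivAt
      (fun q : ℝ × ℝ => SS q ^ k * (((k : ℝ) + 2) * q.1 * P (TH φ q) - q.2 * deriv P (TH φ q)))
      _ (ρ * Real.cos φ, ρ * Real.sin φ) :=
    (hasFDerivAt_SSpow k _ h2).mul
      ((((hasFDerivAt_fst (𝕜 := ℝ)).const_mul ((k : ℝ) + 2)).mul hPd).sub
        ((hasFDerivAt_snd (𝕜 := ℝ)).mul hPd2))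
  have hB2 : HasFDerivAt
      (fun q : ℝ × ℝ => SS q ^ k * (((k : ℝ) + 2) * q.2 * P (TH φ q) + q.1 * deriv P (TH φ q)))
      _ (ρ * Real.cos φ, ρ * Real.sin φ) :=
    (hasFDerivAt_SSpow k _ h2).mul
      ((((hasFDerivAt_snd (𝕜 := ℝ)).const_mul ((k : ℝ) + 2)).mul hPd).add
        ((hasFDerivAt_fst (𝕜 := ℝ)).mul hPd2))
  have hρ0 : ρ ≠ 0 := hρ.ne'
  refine ⟨?_, ?_, ?_⟩
  · rw [fxx, hev1.fderiv_eq, hB1.fderiv]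
    simp only [ContinuousLinearMap.add_apply, ContinuousLinearMap.sub_apply,
      ContinuousLinearMap.coe_smul', Pi.smul_apply, ContinuousLinearMap.coe_sub', Pi.sub_apply,
      ContinuousLinearMap.coe_fst', ContinuousLinearMap.coe_snd',
      lm_apply, smul_eq_mul, hSp0, hTp0, hrp0]
    field_simp
    ring
  · rw [fxy, hev2.fderiv_eq, hB2.fderiv]
    simp only [ContinuousLinearMap.add_apply, ContinuousLinearMap.sub_apply,
      ContinuousLinearMap.coe_smul', Pi.smul_apply, ContinuousLinearMap.coe_sub', Pi.sub_apply,
      ContinuousLinearMap.coe_fst', ContinuousLinearMap.coe_snd',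
      lm_apply, smul_eq_mul, hSp0, hTp0, hrp0]
    field_simp
    ring
  · rw [fyy, hev2.fderiv_eq, hB2.fderiv]
    simp only [ContinuousLinearMap.add_apply, ContinuousLinearMap.sub_apply,
      ContinuousLinearMap.coe_smul', Pi.smul_apply, ContinuousLinearMap.coe_sub', Pi.sub_apply,
      ContinuousLinearMap.coe_fst', ContinuousLinearMap.coe_snd',
      lm_apply, smul_eq_mul, hSp0, hTp0, hrp0]
    field_simp
    ring

theorem stmt_9 (m : ℕ) (hm : 2 ≤ m) (P : ℝ → ℝ)
    (hP : ContDiff ℝ 2 P) (hper : Function.Periodic P (2 * π))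
    (F : ℝ × ℝ → ℝ)
    (hF : ∀ ρ φ : ℝ, 0 < ρ → F (ρ * Real.cos φ, ρ * Real.sin φ) = ρ ^ m * P φ) :
    (∀ ρ φ : ℝ, 0 < ρ →
      fxx F (ρ * Real.cos φ, ρ * Real.sin φ) * fyy F (ρ * Real.cos φ, ρ * Real.sin φ) -
          fxy F (ρ * Real.cos φ, ρ * Real.sin φ) ^ 2 =
        ((m : ℝ) - 1) * ρ ^ (2 * m - 4) *
          ((m : ℝ) ^ 2 * P φ ^ 2 + (m : ℝ) * P φ * deriv (deriv P) φ -
            ((m : ℝ) - 1) * deriv P φ ^ 2)) ∧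
    ((∀ p : ℝ × ℝ, p ≠ 0 → 0 < fxx F p * fyy F p - fxy F p ^ 2) ↔
      ∀ φ : ℝ,
        0 < (m : ℝ) ^ 2 * P φ ^ 2 + (m : ℝ) * P φ * deriv (deriv P) φ -
          ((m : ℝ) - 1) * deriv P φ ^ 2) := by
  obtain ⟨k, rfl⟩ : ∃ k, m = k + 2 := ⟨m - 2, by omega⟩
  have hP1 : Differentiable ℝ P := hP.differentiable (by norm_num)
  have h21 : ContDiff ℝ ((1 : WithTop ℕ∞) + 1) P := by
    have h12 : ((1 : WithTop ℕ∞) + 1) = 2 := by norm_num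
    rw [h12]; exact hP
  have hP2 : Differentiable ℝ (deriv P) :=
    (contDiff_succ_iff_deriv.mp h21).2.2.differentiable (by norm_num)
  have hdet : ∀ ρ φ : ℝ, 0 < ρ →
      fxx F (ρ * Real.cos φ, ρ * Real.sin φ) * fyy F (ρ * Real.cos φ, ρ * Real.sin φ) -
          fxy F (ρ * Real.cos φ, ρ * Real.sin φ) ^ 2 =
        (((k : ℝ) + 2) - 1) * ρ ^ (2 * (k + 2) - 4) *
          (((k : ℝ) + 2) ^ 2 * P φ ^ 2 + ((k : ℝ) + 2) * P φ * deriv (deriv P) φ -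
            (((k : ℝ) + 2) - 1) * deriv P φ ^ 2) := by
    intro ρ ψ hρ
    obtain ⟨hxx, hxy, hyy⟩ := key k P hP1 hP2 F hF ρ ψ hρ
    rw [hxx, hxy, hyy, show 2 * (k + 2) - 4 = 2 * k by omega]
    set c := Real.cos ψ
    set s := Real.sin ψ
    set p := P ψ
    set q := deriv P ψ
    set r := deriv (deriv P) ψ
    linear_combination (ρ ^ (2 * k) *
      (2*p*r + (-4)*s^2*q^2 + (-2)*c*s*q*r + (-2)*(k:ℝ)*q^2 + 3*(k:ℝ)*p*r + 4*(k:ℝ)*p^2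
        + (-4)*(k:ℝ)*s^2*q^2 + 2*(k:ℝ)*s^2*p*r + 4*(k:ℝ)*c*s*p*q + 2*(k:ℝ)*c^2*p*r
        + (-1)*(k:ℝ)^2*q^2 + (k:ℝ)^2*p*r + 4*(k:ℝ)^2*p^2 + (-1)*(k:ℝ)^2*s^2*q^2
        + (k:ℝ)^2*s^2*p*r + 2*(k:ℝ)^2*c*s*p*q + (-1)*(k:ℝ)^2*c^2*q^2 + (k:ℝ)^2*c^2*p*r
        + (k:ℝ)^3*p^2)) *
      Real.sin_sq_add_cos_sq ψ
  have hdet' : ∀ ρ φ : ℝ, 0 < ρ →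
      fxx F (ρ * Real.cos φ, ρ * Real.sin φ) * fyy F (ρ * Real.cos φ, ρ * Real.sin φ) -
          fxy F (ρ * Real.cos φ, ρ * Real.sin φ) ^ 2 =
        (((k + 2 : ℕ) : ℝ) - 1) * ρ ^ (2 * (k + 2) - 4) *
          (((k + 2 : ℕ) : ℝ) ^ 2 * P φ ^ 2 + ((k + 2 : ℕ) : ℝ) * P φ * deriv (deriv P) φ -
            (((k + 2 : ℕ) : ℝ) - 1) * deriv P φ ^ 2) := by
    intro ρ ψ hρ
    rw [hdet ρ ψ hρ]
    push_cast
    ring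
  refine ⟨hdet', ?_⟩
  constructor
  · intro h ψ
    have h1 := hdet' 1 ψ one_pos
    have hp : ((1 : ℝ) * Real.cos ψ, (1 : ℝ) * Real.sin ψ) ≠ 0 := by
      intro hc
      have h1 := congrArg Prod.fst hc
      have h2 := congrArg Prod.snd hc
      simp only [Prod.fst_zero, Prod.snd_zero, one_mul] at h1 h2
      nlinarith [Real.sin_sq_add_cos_sq ψ]
    have h2 := h _ hp
    rw [h1, one_pow] at h2
    have hk1 : (0 : ℝ) < ((k + 2 : ℕ) : ℝ) - 1 := by
      push_cast; linarith [Nat.cast_nonneg (α := ℝ) k]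
    nlinarith [h2, hk1]
  · intro h p hp
    set z : ℂ := ⟨p.1, p.2⟩ with hz'
    have hz : z ≠ 0 := by
      intro hc
      apply hp
      have h1 : p.1 = 0 := by simpa [hz'] using congrArg Complex.re hc
      have h2 : p.2 = 0 := by simpa [hz'] using congrArg Complex.im hc
      have : p = (p.1, p.2) := rfl
      rw [this, h1, h2]; rfl
    have hr : 0 < ‖z‖ := norm_pos_iff.mpr hz
    have h1 : ‖z‖ * Real.cos (Complex.arg z) = p.1 := Complex.norm_mul_cos_arg z
    have h2 : ‖z‖ * Real.sin (Complex.arg z) = p.2 := Complex.norm_mul_sin_arg z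
    have hd := hdet' ‖z‖ (Complex.arg z) hr
    rw [h1, h2, Prod.mk.eta] at hd
    rw [hd]
    have hk1 : (0 : ℝ) < ((k + 2 : ℕ) : ℝ) - 1 := by
      push_cast; linarith [Nat.cast_nonneg (α := ℝ) k]
    exact mul_pos (mul_pos hk1 (pow_pos hr _)) (h _)
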